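/- Let n ≥ 2 be a natural number and let ℓ₁ ≥ ℓ₂ > 0 be real numbers with relative eigengap δ = (ℓ₁ − ℓ₂)/ℓ₁. Then 2·(Real.log n)/n + Real.log ℓ₁ + Real.log ℓ₂ − 2·Real.log((ℓ₁ + ℓ₂)/2) > 0 if and only if δ < 2·(1 − n^(2/n) + n^(1/n)·Real.sqrt(n^(2/n) − 1)). -/

import Mathlib

open Real

theorem bic_releigengap_threshold (n : ℕ) (hn : 2 ≤ n)
    (ℓ₁ ℓ₂ : ℝ) (h12 : ℓ₂ ≤ ℓ₁) (h2pos : 0 < ℓ₂)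
    (δ : ℝ) (hδ : δ = (ℓ₁ - ℓ₂) / ℓ₁) :
    0 < 2 * Real.log n / n + Real.log ℓ₁ + Real.log ℓ₂ - 2 * Real.log ((ℓ₁ + ℓ₂) / 2) ↔
      δ < 2 * (1 - (n : ℝ) ^ ((2 : ℝ) / n) +
        (n : ℝ) ^ ((1 : ℝ) / n) * Real.sqrt ((n : ℝ) ^ ((2 : ℝ) / n) - 1)) := by
  have hn1 : (1 : ℝ) < n := by exact_mod_cast lt_of_lt_of_le one_lt_two (by exact_mod_cast hn)
  have hnpos : (0 : ℝ) < n := lt_trans one_pos hn1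
  set a : ℝ := (n : ℝ) ^ ((2 : ℝ) / n) with ha_def
  set c : ℝ := (n : ℝ) ^ ((1 : ℝ) / n) with hc_def
  have ha1 : 1 < a := by
    rw [Real.one_lt_rpow_iff_of_pos hnpos]
    exact Or.inl ⟨hn1, by positivity⟩
  have hcpos : 0 < c := Real.rpow_pos_of_pos hnpos _
  have hc2 : c ^ 2 = a := by
    rw [ha_def, hc_def, sq, ← Real.rpow_add hnpos]
    ring_nf
  set s : ℝ := Real.sqrt (a - 1) with hs_def
  have hs2 : s ^ 2 = a - 1 := Real.sq_sqrt (by linarith)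
  have hspos : 0 < s := Real.sqrt_pos.2 (by linarith)
  have hcs : (c * s) ^ 2 = a * (a - 1) := by rw [mul_pow, hc2, hs2]
  have h1pos : 0 < ℓ₁ := lt_of_lt_of_le h2pos h12
  have hδ0 : 0 ≤ δ := by
    rw [hδ]; apply div_nonneg (by linarith) (le_of_lt h1pos)
  have hℓ2 : ℓ₂ = ℓ₁ * (1 - δ) := by
    rw [hδ]; field_simp; ring
  have hlog : 2 * Real.log n / n = Real.log a := by
    rw [ha_def, Real.log_rpow hnpos]; ring
  have hmpos : 0 < (ℓ₁ + ℓ₂) / 2 := by linarith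
  have hstep1 : (0 < 2 * Real.log n / n + Real.log ℓ₁ + Real.log ℓ₂ -
      2 * Real.log ((ℓ₁ + ℓ₂) / 2)) ↔ ((ℓ₁ + ℓ₂) / 2) ^ 2 < a * ℓ₁ * ℓ₂ := by
    rw [hlog]
    have e1 : Real.log a + Real.log ℓ₁ + Real.log ℓ₂ = Real.log (a * ℓ₁ * ℓ₂) := by
      rw [Real.log_mul (by positivity) (ne_of_gt h2pos),
        Real.log_mul (by positivity) (ne_of_gt h1pos)]
    have e2 : 2 * Real.log ((ℓ₁ + ℓ₂) / 2) = Real.log (((ℓ₁ + ℓ₂) / 2) ^ 2) := by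
      rw [Real.log_pow]; push_cast; ring
    constructor
    · intro h
      have : Real.log (((ℓ₁ + ℓ₂) / 2) ^ 2) < Real.log (a * ℓ₁ * ℓ₂) := by
        rw [← e1, ← e2]; linarith
      exact (Real.log_lt_log_iff (by positivity) (mul_pos (mul_pos (by linarith : (0:ℝ) < a) h1pos) h2pos)).1 this
    · intro h
      have : Real.log (((ℓ₁ + ℓ₂) / 2) ^ 2) < Real.log (a * ℓ₁ * ℓ₂) :=
        Real.log_lt_log (by positivity) h
      rw [← e1, ← e2] at this; linarith
  rw [hstep1, hℓ2]
  constructor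
  · intro h
    by_contra hge
    push_neg at hge
    have hr2 : 0 ≤ δ - 2 * (1 - a - c * s) := by nlinarith [mul_pos hcpos hspos]
    nlinarith [mul_nonneg (sub_nonneg.2 hge) hr2, sq_nonneg ℓ₁, mul_pos h1pos h1pos]
  · intro hlt
    have hr2 : 0 < δ - 2 * (1 - a - c * s) := by nlinarith [mul_pos hcpos hspos]
    nlinarith [mul_pos (sub_pos.2 hlt) hr2, mul_pos h1pos h1pos]
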